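/- Fix a finite state space S, a finite action set A, a policy π : S → PMF(A), a reward kernel R : S × A → PMF(ℝ), a transition kernel P : S × A → PMF(S), a discount factor γ ∈ [0,1), a step size α ∈ (0,1), and N ∈ ℕ, and let k = 1 − α + αγ (so k < 1). Then for all initial value estimates V₁, V₂ : S → ℝ: (i) the Kantorovich lifting of the sup-norm cost E(W₁,W₂) = ‖W₁ − W₂‖_∞ satisfies K_E(TD0_N(V₁), TD0_N(V₂)) ≤ k^N · ‖V₁ − V₂‖_∞; and consequently (ii) for every state i, |E_{W ∼ TD0_N(V₁)}[W(i)] − E_{W ∼ TD0_N(V₂)}[W(i)]| ≤ k^N · ‖V₁ − V₂‖_∞. -/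

import Mathlib

open scoped ENNReal

section TD0

variable {S A : Type*} [Fintype S] [DecidableEq S] [Fintype A]
variable (π : S → PMF A) (R : S × A → PMF ℝ) (P : S × A → PMF S) (γ α : ℝ)

/-- Auxiliary: perform the TD(0) update (with fresh, independent samples) at each state in the
given list, keeping the old estimate `V` as the basis of every update. -/
noncomputable def tdSweepAux (V : S → ℝ) : List S → PMF (S → ℝ)
  | [] => PMF.pure V
  | i :: l =>
      (tdSweepAux V l).bind fun W =>
        (π i).bind fun a =>
          (R (i, a)).bind fun r =>
            (P (i, a)).map fun j =>
              Function.update W i ((1 - α) * V i + α * (r + γ * V j))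

/-- One TD(0) sweep: independently for each state `i`, sample `a ∼ π(i)`, `r ∼ R(i,a)`,
`j ∼ P(i,a)` and set `W i = (1−α)·V i + α·(r + γ·V j)`. -/
noncomputable def tdSweep (V : S → ℝ) : PMF (S → ℝ) :=
  tdSweepAux π R P γ α V Finset.univ.toList

/-- The distribution of the value estimate after `N` successive TD(0) sweeps starting from `V`. -/
noncomputable def TD0 : ℕ → (S → ℝ) → PMF (S → ℝ)
  | 0, V => PMF.pure V
  | (n + 1), V => (tdSweep π R P γ α V).bind (TD0 n)

end TD0

/-- Sup-norm of a function on a finite nonempty type. -/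
noncomputable def supNorm {S : Type*} [Fintype S] [Nonempty S] (V : S → ℝ) : ℝ :=
  ⨆ i, |V i|

/-- `μ` is a coupling of the distributions `μ₁`, `μ₂`. -/
def IsCouplingPMF {X : Type*} (μ : PMF (X × X)) (μ₁ μ₂ : PMF X) : Prop :=
  μ.map Prod.fst = μ₁ ∧ μ.map Prod.snd = μ₂

/-- Kantorovich lifting of the cost `E` to distributions. -/
noncomputable def kantPMF {X : Type*} (E : X × X → ℝ≥0∞) (μ₁ μ₂ : PMF X) : ℝ≥0∞ :=
  ⨅ (μ : PMF (X × X)) (_ : IsCouplingPMF μ μ₁ μ₂), ∑' p, E p * μ p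
/-! ### Auxiliary lemmas -/

set_option linter.unusedSectionVars false

section TsumHelpers

variable {β γ : Type*}

lemma pmf_tsum_map_enn (μ : PMF β) (f : β → γ) (h : γ → ℝ≥0∞) :
    ∑' c, (μ.map f) c * h c = ∑' b, μ b * h (f b) := by
  simp_rw [PMF.map_apply, ← ENNReal.tsum_mul_right]
  rw [ENNReal.tsum_comm]
  refine tsum_congr fun b => ?_
  rw [tsum_eq_single (f b) (fun c hc => by rw [if_neg hc, zero_mul])]
  simp

lemma ofReal_max_zero (x : ℝ) : ENNReal.ofReal (max x 0) = ENNReal.ofReal x := by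
  rcases le_total 0 x with h | h
  · rw [max_eq_left h]
  · rw [max_eq_right h, ENNReal.ofReal_zero, ENNReal.ofReal_of_nonpos h]

lemma pmf_ofReal_term (μ : PMF β) (g : β → ℝ) (b : β) :
    ENNReal.ofReal ((μ b).toReal * g b) = μ b * ENNReal.ofReal (g b) := by
  rw [ENNReal.ofReal_mul ENNReal.toReal_nonneg, ENNReal.ofReal_toReal (μ.apply_ne_top b)]

lemma pmf_summable_char (μ : PMF β) (g : β → ℝ) :
    Summable (fun b => (μ b).toReal * g b) ↔ ∑' b, μ b * ENNReal.ofReal |g b| ≠ ⊤ := by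
  constructor
  · intro hs
    have habs : Summable fun b => (μ b).toReal * |g b| := by
      simpa [abs_mul, abs_of_nonneg (ENNReal.toReal_nonneg (a := μ _))] using hs.abs
    have := ENNReal.ofReal_tsum_of_nonneg
      (fun b => mul_nonneg ENNReal.toReal_nonneg (abs_nonneg _)) habs
    simp_rw [pmf_ofReal_term μ (fun b => |g b|)] at this
    rw [← this]
    exact ENNReal.ofReal_ne_top
  · intro hne
    have hs := ENNReal.summable_toReal hne
    have : (fun b => (μ b * ENNReal.ofReal |g b|).toReal) = fun b => |(μ b).toReal * g b| := by
      funext b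
      rw [ENNReal.toReal_mul, ENNReal.toReal_ofReal (abs_nonneg _), abs_mul,
        abs_of_nonneg (ENNReal.toReal_nonneg (a := μ b))]
    rw [this] at hs
    exact hs.of_abs

lemma pmf_tsum_nonneg_eq (μ : PMF β) (g : β → ℝ) (hg : ∀ b, 0 ≤ g b)
    (hs : Summable fun b => (μ b).toReal * g b) :
    ∑' b, (μ b).toReal * g b = (∑' b, μ b * ENNReal.ofReal (g b)).toReal := by
  have := ENNReal.ofReal_tsum_of_nonneg
    (fun b => mul_nonneg ENNReal.toReal_nonneg (hg b)) hs
  simp_rw [pmf_ofReal_term] at this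
  rw [← this, ENNReal.toReal_ofReal]
  exact tsum_nonneg fun b => mul_nonneg ENNReal.toReal_nonneg (hg b)

lemma pmf_tsum_eq (μ : PMF β) (g : β → ℝ) (hs : Summable fun b => (μ b).toReal * g b) :
    ∑' b, (μ b).toReal * g b
      = (∑' b, μ b * ENNReal.ofReal (g b)).toReal
        - (∑' b, μ b * ENNReal.ofReal (-g b)).toReal := by
  have habs : Summable fun b => (μ b).toReal * |g b| := by
    simpa [abs_mul, abs_of_nonneg (ENNReal.toReal_nonneg (a := μ _))] using hs.abs
  have hpos : Summable fun b => (μ b).toReal * max (g b) 0 :=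
    Summable.of_nonneg_of_le (fun b => mul_nonneg ENNReal.toReal_nonneg (le_max_right _ _))
      (fun b => mul_le_mul_of_nonneg_left (by rcases le_total 0 (g b) with h|h <;>
        simp [max_eq_left, max_eq_right, abs_of_nonneg, abs_of_nonpos, h])
        ENNReal.toReal_nonneg) habs
  have hneg : Summable fun b => (μ b).toReal * max (-g b) 0 :=
    Summable.of_nonneg_of_le (fun b => mul_nonneg ENNReal.toReal_nonneg (le_max_right _ _))
      (fun b => mul_le_mul_of_nonneg_left (by rcases le_total 0 (g b) with h|h <;>
        simp [max_eq_left, max_eq_right, abs_of_nonneg, abs_of_nonpos, h, neg_nonneg,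
          neg_nonpos]) ENNReal.toReal_nonneg) habs
  have hdecomp : (fun b => (μ b).toReal * g b)
      = fun b => (μ b).toReal * max (g b) 0 - (μ b).toReal * max (-g b) 0 := by
    funext b
    rw [← mul_sub]
    congr 1
    rcases le_total 0 (g b) with h|h
    · rw [max_eq_left h, max_eq_right (by linarith)]; ring
    · rw [max_eq_right h, max_eq_left (by linarith)]; ring
  rw [hdecomp, Summable.tsum_sub hpos hneg,
    pmf_tsum_nonneg_eq μ _ (fun b => le_max_right _ _) hpos,
    pmf_tsum_nonneg_eq μ _ (fun b => le_max_right _ _) hneg]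
  simp_rw [ofReal_max_zero]

/-- tsum against a pushforward PMF, real version, valid unconditionally. -/
lemma pmf_tsum_map_real (μ : PMF β) (f : β → γ) (g : γ → ℝ) :
    ∑' c, ((μ.map f) c).toReal * g c = ∑' b, (μ b).toReal * g (f b) := by
  have hchar : Summable (fun c => ((μ.map f) c).toReal * g c)
      ↔ Summable (fun b => (μ b).toReal * g (f b)) := by
    rw [pmf_summable_char, pmf_summable_char,
      pmf_tsum_map_enn μ f (fun c => ENNReal.ofReal |g c|)]
  by_cases hs : Summable fun b => (μ b).toReal * g (f b)
  · rw [pmf_tsum_eq _ _ (hchar.mpr hs), pmf_tsum_eq _ _ hs,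
      pmf_tsum_map_enn μ f (fun c => ENNReal.ofReal (g c)),
      pmf_tsum_map_enn μ f (fun c => ENNReal.ofReal (-g c))]
  · rw [tsum_eq_zero_of_not_summable hs,
      tsum_eq_zero_of_not_summable (fun h => hs (hchar.mp h))]

lemma pmf_summable_toReal (μ : PMF β) : Summable fun b => (μ b).toReal :=
  ENNReal.summable_toReal (by rw [μ.tsum_coe]; exact ENNReal.one_ne_top)

lemma pmf_tsum_toReal (μ : PMF β) : ∑' b, (μ b).toReal = 1 := by
  rw [← ENNReal.tsum_toReal_eq μ.apply_ne_top, μ.tsum_coe, ENNReal.toReal_one]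

lemma pmf_summable_transfer (μ : PMF β) (f₁ f₂ : β → ℝ) {c : ℝ}
    (hs : ∀ b ∈ μ.support, |f₁ b - f₂ b| ≤ c)
    (h2 : Summable fun b => (μ b).toReal * f₂ b) :
    Summable fun b => (μ b).toReal * f₁ b := by
  rw [pmf_summable_char] at h2 ⊢
  have hle : ∑' b, μ b * ENNReal.ofReal |f₁ b|
      ≤ ∑' b, (μ b * ENNReal.ofReal |f₂ b| + μ b * ENNReal.ofReal c) := by
    refine ENNReal.tsum_le_tsum fun b => ?_
    by_cases hb : μ b = 0
    · simp [hb]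
    · have hmem : b ∈ μ.support := by rwa [PMF.mem_support_iff]
      have h1 : |f₁ b| ≤ |f₂ b| + c := by
        have := abs_sub_abs_le_abs_sub (f₁ b) (f₂ b)
        have := hs b hmem
        linarith
      calc μ b * ENNReal.ofReal |f₁ b|
          ≤ μ b * (ENNReal.ofReal |f₂ b| + ENNReal.ofReal c) :=
            mul_le_mul_right ((ENNReal.ofReal_le_ofReal h1).trans ENNReal.ofReal_add_le) _
        _ = μ b * ENNReal.ofReal |f₂ b| + μ b * ENNReal.ofReal c := mul_add _ _ _
  rw [ENNReal.tsum_add, ENNReal.tsum_mul_right, μ.tsum_coe, one_mul] at hle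
  exact ne_top_of_le_ne_top (ENNReal.add_ne_top.mpr ⟨h2, ENNReal.ofReal_ne_top⟩) hle

lemma pmf_couple_bound (μ : PMF β) (f₁ f₂ : β → ℝ) {c : ℝ} (hc : 0 ≤ c)
    (hs : ∀ b ∈ μ.support, |f₁ b - f₂ b| ≤ c) :
    |(∑' b, (μ b).toReal * f₁ b) - ∑' b, (μ b).toReal * f₂ b| ≤ c := by
  by_cases h2 : Summable fun b => (μ b).toReal * f₂ b
  · have h1 : Summable fun b => (μ b).toReal * f₁ b := pmf_summable_transfer μ f₁ f₂ hs h2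
    have habs : ∀ b, |(μ b).toReal * f₁ b - (μ b).toReal * f₂ b|
        ≤ (μ b).toReal * c := by
      intro b
      rw [← mul_sub, abs_mul, abs_of_nonneg (ENNReal.toReal_nonneg (a := μ b))]
      by_cases hb : μ b = 0
      · simp [hb]
      · exact mul_le_mul_of_nonneg_left (hs b (by rwa [PMF.mem_support_iff]))
          ENNReal.toReal_nonneg
    have hsummc : Summable fun b => (μ b).toReal * c := (pmf_summable_toReal μ).mul_right c
    have hsumabs : Summable fun b => |(μ b).toReal * f₁ b - (μ b).toReal * f₂ b| :=
      Summable.of_nonneg_of_le (fun b => abs_nonneg _) habs hsummc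
    rw [← Summable.tsum_sub h1 h2]
    have hnorm : Summable fun b => ‖(μ b).toReal * f₁ b - (μ b).toReal * f₂ b‖ := by
      simpa only [Real.norm_eq_abs] using hsumabs
    have hbig := norm_tsum_le_tsum_norm hnorm
    simp only [Real.norm_eq_abs] at hbig
    calc |∑' b, ((μ b).toReal * f₁ b - (μ b).toReal * f₂ b)|
        ≤ ∑' b, |(μ b).toReal * f₁ b - (μ b).toReal * f₂ b| := hbig
      _ ≤ ∑' b, (μ b).toReal * c := Summable.tsum_le_tsum habs hsumabs hsummc
      _ = (∑' b, (μ b).toReal) * c := tsum_mul_right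
      _ = c := by rw [pmf_tsum_toReal, one_mul]
  · have h1 : ¬ Summable fun b => (μ b).toReal * f₁ b := fun h =>
      h2 (pmf_summable_transfer μ f₂ f₁ (fun b hb => by rw [abs_sub_comm]; exact hs b hb) h)
    rw [tsum_eq_zero_of_not_summable h1, tsum_eq_zero_of_not_summable h2]
    simpa using hc

end TsumHelpers

section SupNormHelpers
variable {S : Type*} [Fintype S] [Nonempty S]

lemma abs_le_supNorm (V : S → ℝ) (x : S) : |V x| ≤ supNorm V :=
  le_ciSup (f := fun i => |V i|) (Finite.bddAbove_range _) x

lemma supNorm_nonneg (V : S → ℝ) : 0 ≤ supNorm V :=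
  le_trans (abs_nonneg _) (abs_le_supNorm V (Classical.arbitrary S))

lemma supNorm_le {V : S → ℝ} {c : ℝ} (h : ∀ x, |V x| ≤ c) : supNorm V ≤ c :=
  ciSup_le h

end SupNormHelpers

section TD0Coupled

variable {S A : Type*} [Fintype S] [DecidableEq S] [Fintype A]
variable (π : S → PMF A) (R : S × A → PMF ℝ) (P : S × A → PMF S) (γ α : ℝ)

/-- Synchronously coupled version of `tdSweepAux`. -/
noncomputable def tdSweepAux2 (V₁ V₂ : S → ℝ) : List S → PMF ((S → ℝ) × (S → ℝ))
  | [] => PMF.pure (V₁, V₂)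
  | i :: l =>
      (tdSweepAux2 V₁ V₂ l).bind fun W =>
        (π i).bind fun a =>
          (R (i, a)).bind fun r =>
            (P (i, a)).map fun j =>
              (Function.update W.1 i ((1 - α) * V₁ i + α * (r + γ * V₁ j)),
               Function.update W.2 i ((1 - α) * V₂ i + α * (r + γ * V₂ j)))

/-- Synchronously coupled version of `tdSweep`. -/
noncomputable def tdSweep2 (V₁ V₂ : S → ℝ) : PMF ((S → ℝ) × (S → ℝ)) :=
  tdSweepAux2 π R P γ α V₁ V₂ Finset.univ.toList

/-- Synchronously coupled version of `TD0`. -/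
noncomputable def TD02 : ℕ → (S → ℝ) × (S → ℝ) → PMF ((S → ℝ) × (S → ℝ))
  | 0, V => PMF.pure V
  | (n + 1), V => (tdSweep2 π R P γ α V.1 V.2).bind (TD02 n)

lemma tdSweepAux2_fst (V₁ V₂ : S → ℝ) (l : List S) :
    (tdSweepAux2 π R P γ α V₁ V₂ l).map Prod.fst = tdSweepAux π R P γ α V₁ l := by
  induction l with
  | nil => simp [tdSweepAux2, tdSweepAux, PMF.pure_map]
  | cons i l ih =>
    rw [tdSweepAux2, tdSweepAux, PMF.map_bind, ← ih, PMF.bind_map]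
    congr 1
    funext W
    simp only [PMF.map_bind, PMF.map_comp, Function.comp_def]

lemma tdSweepAux2_snd (V₁ V₂ : S → ℝ) (l : List S) :
    (tdSweepAux2 π R P γ α V₁ V₂ l).map Prod.snd = tdSweepAux π R P γ α V₂ l := by
  induction l with
  | nil => simp [tdSweepAux2, tdSweepAux, PMF.pure_map]
  | cons i l ih =>
    rw [tdSweepAux2, tdSweepAux, PMF.map_bind, ← ih, PMF.bind_map]
    congr 1
    funext W
    simp only [PMF.map_bind, PMF.map_comp, Function.comp_def]

lemma TD02_fst (N : ℕ) (V : (S → ℝ) × (S → ℝ)) :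
    (TD02 π R P γ α N V).map Prod.fst = TD0 π R P γ α N V.1 := by
  induction N generalizing V with
  | zero => simp [TD02, TD0, PMF.pure_map]
  | succ n ih =>
    rw [TD02, TD0, PMF.map_bind]
    have h : (fun W => (TD02 π R P γ α n W).map Prod.fst)
        = fun W : (S → ℝ) × (S → ℝ) => TD0 π R P γ α n W.1 := funext fun W => ih W
    rw [h, show (fun W : (S → ℝ) × (S → ℝ) => TD0 π R P γ α n W.1)
        = (TD0 π R P γ α n) ∘ Prod.fst from rfl, ← PMF.bind_map,
      tdSweep2, tdSweep, tdSweepAux2_fst]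

lemma TD02_snd (N : ℕ) (V : (S → ℝ) × (S → ℝ)) :
    (TD02 π R P γ α N V).map Prod.snd = TD0 π R P γ α N V.2 := by
  induction N generalizing V with
  | zero => simp [TD02, TD0, PMF.pure_map]
  | succ n ih =>
    rw [TD02, TD0, PMF.map_bind]
    have h : (fun W => (TD02 π R P γ α n W).map Prod.snd)
        = fun W : (S → ℝ) × (S → ℝ) => TD0 π R P γ α n W.2 := funext fun W => ih W
    rw [h, show (fun W : (S → ℝ) × (S → ℝ) => TD0 π R P γ α n W.2)
        = (TD0 π R P γ α n) ∘ Prod.snd from rfl, ← PMF.bind_map,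
      tdSweep2, tdSweep, tdSweepAux2_snd]

variable {γ α : ℝ}

lemma tdSweepAux2_support (hγ0 : 0 ≤ γ) (hα0 : 0 ≤ α) (hα1 : α ≤ 1)
    (V₁ V₂ : S → ℝ) {c : ℝ} (hc : ∀ x, |V₁ x - V₂ x| ≤ c) (l : List S) :
    ∀ W ∈ (tdSweepAux2 π R P γ α V₁ V₂ l).support, ∀ x : S,
      (x ∈ l → |W.1 x - W.2 x| ≤ (1 - α + α * γ) * c)
      ∧ (x ∉ l → W.1 x = V₁ x ∧ W.2 x = V₂ x) := by
  induction l with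
  | nil =>
    intro W hW x
    rw [tdSweepAux2, PMF.support_pure, Set.mem_singleton_iff] at hW
    subst hW
    exact ⟨fun h => absurd h List.not_mem_nil, fun _ => ⟨rfl, rfl⟩⟩
  | cons i l ih =>
    intro W hW x
    rw [tdSweepAux2, PMF.support_bind] at hW
    simp only [Set.mem_iUnion] at hW
    obtain ⟨W', hW', hW2⟩ := hW
    rw [PMF.support_bind] at hW2
    simp only [Set.mem_iUnion] at hW2
    obtain ⟨a, _, hW3⟩ := hW2
    rw [PMF.support_bind] at hW3
    simp only [Set.mem_iUnion] at hW3
    obtain ⟨r, _, hW4⟩ := hW3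
    rw [PMF.support_map] at hW4
    obtain ⟨j, _, rfl⟩ := hW4
    by_cases hx : x = i
    · subst hx
      constructor
      · intro _
        simp only [Function.update_self]
        have key : (1 - α) * V₁ x + α * (r + γ * V₁ j)
            - ((1 - α) * V₂ x + α * (r + γ * V₂ j))
            = (1 - α) * (V₁ x - V₂ x) + α * γ * (V₁ j - V₂ j) := by ring
        rw [key]
        calc |(1 - α) * (V₁ x - V₂ x) + α * γ * (V₁ j - V₂ j)|
            ≤ |(1 - α) * (V₁ x - V₂ x)| + |α * γ * (V₁ j - V₂ j)| := abs_add_le _ _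
          _ = (1 - α) * |V₁ x - V₂ x| + α * γ * |V₁ j - V₂ j| := by
              rw [abs_mul, abs_mul, abs_of_nonneg (by linarith : (0:ℝ) ≤ 1 - α),
                abs_of_nonneg (mul_nonneg hα0 hγ0)]
          _ ≤ (1 - α) * c + α * γ * c := by
              have h1 : (1 - α) * |V₁ x - V₂ x| ≤ (1 - α) * c :=
                mul_le_mul_of_nonneg_left (hc x) (by linarith)
              have h2 : α * γ * |V₁ j - V₂ j| ≤ α * γ * c :=
                mul_le_mul_of_nonneg_left (hc j) (mul_nonneg hα0 hγ0)
              linarith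
          _ = (1 - α + α * γ) * c := by ring
      · intro hxl
        exact absurd List.mem_cons_self hxl
    · simp only [Function.update_of_ne hx]
      constructor
      · intro hxl
        rcases List.mem_cons.mp hxl with h | h
        · exact absurd h hx
        · exact (ih W' hW' x).1 h
      · intro hxl
        exact (ih W' hW' x).2 fun h => hxl (List.mem_cons_of_mem _ h)

lemma tdSweep2_support [Nonempty S] (hγ0 : 0 ≤ γ) (hα0 : 0 ≤ α) (hα1 : α ≤ 1)
    (V₁ V₂ : S → ℝ) :
    ∀ W ∈ (tdSweep2 π R P γ α V₁ V₂).support,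
      supNorm (W.1 - W.2) ≤ (1 - α + α * γ) * supNorm (V₁ - V₂) := by
  intro W hW
  refine supNorm_le fun x => ?_
  have hc : ∀ y, |V₁ y - V₂ y| ≤ supNorm (V₁ - V₂) := fun y => by
    simpa [Pi.sub_apply] using abs_le_supNorm (V₁ - V₂) y
  have := (tdSweepAux2_support π R P hγ0 hα0 hα1 V₁ V₂ hc Finset.univ.toList W hW x).1
    (by simp [Finset.mem_toList])
  simpa [Pi.sub_apply] using this

lemma TD02_support [Nonempty S] (hγ0 : 0 ≤ γ) (hα0 : 0 ≤ α) (hα1 : α ≤ 1)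
    (N : ℕ) (V : (S → ℝ) × (S → ℝ)) :
    ∀ p ∈ (TD02 π R P γ α N V).support,
      supNorm (p.1 - p.2) ≤ (1 - α + α * γ) ^ N * supNorm (V.1 - V.2) := by
  have hk0 : (0:ℝ) ≤ 1 - α + α * γ := by
    have := mul_nonneg hα0 hγ0; linarith
  induction N generalizing V with
  | zero =>
    intro p hp
    rw [TD02, PMF.support_pure, Set.mem_singleton_iff] at hp
    subst hp
    simp
  | succ n ih =>
    intro p hp
    rw [TD02, PMF.support_bind] at hp
    simp only [Set.mem_iUnion] at hp
    obtain ⟨W, hW, hp⟩ := hp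
    calc supNorm (p.1 - p.2) ≤ (1 - α + α * γ) ^ n * supNorm (W.1 - W.2) := ih W p hp
      _ ≤ (1 - α + α * γ) ^ n * ((1 - α + α * γ) * supNorm (V.1 - V.2)) :=
          mul_le_mul_of_nonneg_left (tdSweep2_support π R P hγ0 hα0 hα1 V.1 V.2 W hW)
            (pow_nonneg hk0 n)
      _ = (1 - α + α * γ) ^ (n + 1) * supNorm (V.1 - V.2) := by ring

end TD0Coupled


/-- **Convergence of TD(0).** With `k = 1 − α + αγ < 1`, for any two initial value estimates
`V₁, V₂`: (i) the Kantorovich distance (for the sup-norm cost) between the distributions after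
`N` sweeps is at most `k^N · ‖V₁ − V₂‖_∞`, and (ii) for every state `i`, the expected estimates
of `V[i]` after `N` sweeps differ by at most `k^N · ‖V₁ − V₂‖_∞`. -/
theorem td0_convergence {S A : Type*} [Fintype S] [Nonempty S] [DecidableEq S] [Fintype A]
    (π : S → PMF A) (R : S × A → PMF ℝ) (P : S × A → PMF S)
    (γ : ℝ) (hγ0 : 0 ≤ γ) (hγ1 : γ < 1)
    (α : ℝ) (hα0 : 0 < α) (hα1 : α < 1)
    (N : ℕ) (V₁ V₂ : S → ℝ) :
    (kantPMF (fun W => ENNReal.ofReal (supNorm (W.1 - W.2)))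
        (TD0 π R P γ α N V₁) (TD0 π R P γ α N V₂)
      ≤ ENNReal.ofReal ((1 - α + α * γ) ^ N * supNorm (V₁ - V₂))) ∧
    (∀ i : S,
      |(∑' W : S → ℝ, ((TD0 π R P γ α N V₁) W).toReal * W i) -
          (∑' W : S → ℝ, ((TD0 π R P γ α N V₂) W).toReal * W i)|
        ≤ (1 - α + α * γ) ^ N * supNorm (V₁ - V₂)) := by
  have hk0 : (0:ℝ) ≤ 1 - α + α * γ := by
    have := mul_nonneg hα0.le hγ0; linarith
  set c : ℝ := (1 - α + α * γ) ^ N * supNorm (V₁ - V₂) with hcdef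
  have hc0 : 0 ≤ c := mul_nonneg (pow_nonneg hk0 N) (supNorm_nonneg _)
  set μc := TD02 π R P γ α N (V₁, V₂) with hμc
  have hcoup : IsCouplingPMF μc (TD0 π R P γ α N V₁) (TD0 π R P γ α N V₂) :=
    ⟨TD02_fst π R P γ α N (V₁, V₂), TD02_snd π R P γ α N (V₁, V₂)⟩
  have hsupp : ∀ p ∈ μc.support, supNorm (p.1 - p.2) ≤ c :=
    TD02_support π R P hγ0 hα0.le hα1.le N (V₁, V₂)
  constructor
  · refine le_trans (iInf₂_le μc hcoup) ?_
    calc ∑' p, ENNReal.ofReal (supNorm (p.1 - p.2)) * μc p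
        ≤ ∑' p : (S → ℝ) × (S → ℝ), ENNReal.ofReal c * μc p := by
          refine ENNReal.tsum_le_tsum fun p => ?_
          by_cases hp : μc p = 0
          · simp [hp]
          · exact mul_le_mul_left
              (ENNReal.ofReal_le_ofReal (hsupp p (by rwa [PMF.mem_support_iff]))) _
      _ = ENNReal.ofReal c := by rw [ENNReal.tsum_mul_left, μc.tsum_coe, mul_one]
  · intro i
    rw [show TD0 π R P γ α N V₁ = μc.map Prod.fst from (hcoup.1).symm,
      show TD0 π R P γ α N V₂ = μc.map Prod.snd from (hcoup.2).symm,
      pmf_tsum_map_real μc Prod.fst (fun W => W i),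
      pmf_tsum_map_real μc Prod.snd (fun W => W i)]
    refine pmf_couple_bound μc _ _ hc0 fun p hp => ?_
    calc |p.1 i - p.2 i| = |(p.1 - p.2) i| := by simp [Pi.sub_apply]
      _ ≤ supNorm (p.1 - p.2) := abs_le_supNorm _ _
      _ ≤ c := hsupp p hp
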